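/- If T is a densely defined operator in a complex Hilbert space H that is C-symmetric with respect to a conjugation C (i.e., T ⊆ CT*C), and for some k ∈ ℕ the power T^k is densely defined, then T^k is C-symmetric, i.e., T^k ⊆ C(T^k)*C. -/

import Mathlib

open InnerProductSpace in
/-- A conjugation on a complex inner product space: an antilinear involution
satisfying `⟪Cf, Cg⟫ = ⟪g, f⟫`. -/
structure Conjugation (H : Type*) [NormedAddCommGroup H] [InnerProductSpace ℂ H] where
  toFun : H → H
  map_add' : ∀ x y, toFun (x + y) = toFun x + toFun y
  map_smul' : ∀ (c : ℂ) (x : H), toFun (c • x) = (starRingEnd ℂ c) • toFun x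
  invol : ∀ x, toFun (toFun x) = x
  inner_map : ∀ x y, (inner ℂ (toFun x) (toFun y) : ℂ) = inner ℂ y x

/-- `T` is `C`-symmetric: `T ⊆ C T* C`. -/
noncomputable def CSymmetric {H : Type*} [NormedAddCommGroup H] [InnerProductSpace ℂ H]
    [CompleteSpace H] (C : Conjugation H) (T : H →ₗ.[ℂ] H) : Prop :=
  ∀ x : T.domain, ∃ hx : C.toFun x ∈ T.adjoint.domain,
    C.toFun (T.adjoint ⟨C.toFun x, hx⟩) = T x

/-- `T` is `C`-selfadjoint: `T = C T* C`. -/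
noncomputable def CSelfAdjoint {H : Type*} [NormedAddCommGroup H] [InnerProductSpace ℂ H]
    [CompleteSpace H] (C : Conjugation H) (T : H →ₗ.[ℂ] H) : Prop :=
  CSymmetric C T ∧ ∀ y : H, C.toFun y ∈ T.adjoint.domain → y ∈ T.domain

/-- Composition of partially defined linear maps, with its natural (maximal) domain. -/
noncomputable def LinearPMap.pcomp {R E F G : Type*} [Ring R] [AddCommGroup E] [Module R E]
    [AddCommGroup F] [Module R F] [AddCommGroup G] [Module R G]
    (g : F →ₗ.[R] G) (f : E →ₗ.[R] F) : E →ₗ.[R] G :=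
  g.comp (f.domRestrict ((g.domain.comap f.toFun).map f.domain.subtype))
    (by
      intro x
      obtain ⟨y, hy, hyx⟩ := (Submodule.mem_inf.mp x.2).1
      have h := LinearPMap.domRestrict_apply (f := f) (x := x) (y := y) (by exact hyx.symm)
      exact h ▸ hy)

/-- Natural powers of a partially defined linear map, `T^(n+1) = T ∘ T^n`, with
`T^0` the identity on the whole space. -/
noncomputable def LinearPMap.ppow {R E : Type*} [Ring R] [AddCommGroup E] [Module R E]
    (T : E →ₗ.[R] E) : ℕ → E →ₗ.[R] E
  | 0 => ⟨⊤, (⊤ : Submodule R E).subtype⟩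
  | n + 1 => T.pcomp (T.ppow n)


section Aux

local notation "⟪" x ", " y "⟫" => @inner ℂ _ _ x y

variable {R E F G : Type*} [Ring R] [AddCommGroup E] [Module R E]
    [AddCommGroup F] [Module R F] [AddCommGroup G] [Module R G]

theorem LinearPMap.apply_congr {f : E →ₗ.[R] F} {a b : f.domain} (h : (a : E) = (b : E)) :
    f a = f b := congr_arg (fun z => f z) (Subtype.ext h)

theorem LinearPMap.mem_pcomp_iff (g : F →ₗ.[R] G) (f : E →ₗ.[R] F) {x : E} :
    x ∈ (g.pcomp f).domain ↔ ∃ hx : x ∈ f.domain, f ⟨x, hx⟩ ∈ g.domain := by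
  constructor
  · rintro ⟨hx1, hx2⟩
    refine ⟨hx2, ?_⟩
    obtain ⟨y, hy, hyx⟩ := hx1
    have : f ⟨x, hx2⟩ = f y := LinearPMap.apply_congr hyx.symm
    rw [this]; exact hy
  · rintro ⟨hx, hfx⟩
    exact ⟨⟨⟨x, hx⟩, hfx, rfl⟩, hx⟩

theorem LinearPMap.pcomp_apply (g : F →ₗ.[R] G) (f : E →ₗ.[R] F) {x : E}
    (h : x ∈ (g.pcomp f).domain) (hx : x ∈ f.domain) (hfx : f ⟨x, hx⟩ ∈ g.domain) :
    (g.pcomp f) ⟨x, h⟩ = g ⟨f ⟨x, hx⟩, hfx⟩ := by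
  have h1 : (g.pcomp f) ⟨x, h⟩
      = g ⟨(f.domRestrict ((g.domain.comap f.toFun).map f.domain.subtype)) ⟨x, h⟩, _⟩ := rfl
  rw [h1]
  have h2 : (f.domRestrict ((g.domain.comap f.toFun).map f.domain.subtype)) ⟨x, h⟩
      = f ⟨x, hx⟩ := LinearPMap.domRestrict_apply rfl
  exact LinearPMap.apply_congr h2

theorem LinearPMap.ppow_zero_apply (T : E →ₗ.[R] E) (x : (T.ppow 0).domain) :
    (T.ppow 0) x = (x : E) := rfl

theorem LinearPMap.mem_ppow_zero (T : E →ₗ.[R] E) (x : E) : x ∈ (T.ppow 0).domain :=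
  Submodule.mem_top

/-- Shift lemma : `T^(k+1) x = T^k (T x)`. -/
theorem LinearPMap.ppow_shift (T : E →ₗ.[R] E) (k : ℕ) {x : E}
    (h : x ∈ (T.ppow (k + 1)).domain) :
    ∃ (h1 : x ∈ T.domain) (h2 : (T ⟨x, h1⟩ : E) ∈ (T.ppow k).domain),
      (T.ppow (k + 1)) ⟨x, h⟩ = (T.ppow k) ⟨T ⟨x, h1⟩, h2⟩ := by
  induction k generalizing x with
  | zero =>
    obtain ⟨hx, hfx⟩ := (LinearPMap.mem_pcomp_iff T (T.ppow 0)).1 h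
    have h1 : x ∈ T.domain := by
      rwa [show ((T.ppow 0) ⟨x, hx⟩ : E) = x from rfl] at hfx
    refine ⟨h1, Submodule.mem_top, ?_⟩
    have e1 := LinearPMap.pcomp_apply T (T.ppow 0) h hx hfx
    exact e1.trans (LinearPMap.apply_congr rfl)
  | succ k ih =>
    obtain ⟨hx, hfx⟩ := (LinearPMap.mem_pcomp_iff T (T.ppow (k + 1))).1 h
    obtain ⟨h1, h2, heq⟩ := ih hx
    have hTk : ((T.ppow k) ⟨T ⟨x, h1⟩, h2⟩ : E) ∈ T.domain := by rw [← heq]; exact hfx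
    have h2' : (T ⟨x, h1⟩ : E) ∈ (T.ppow (k + 1)).domain :=
      (LinearPMap.mem_pcomp_iff T (T.ppow k)).2 ⟨h2, hTk⟩
    refine ⟨h1, h2', ?_⟩
    have e1 : (T.ppow (k + 1 + 1)) ⟨x, h⟩ = T ⟨(T.ppow (k + 1)) ⟨x, hx⟩, hfx⟩ :=
      LinearPMap.pcomp_apply T (T.ppow (k + 1)) h hx hfx
    have e2 : (T.ppow (k + 1)) ⟨T ⟨x, h1⟩, h2'⟩ = T ⟨(T.ppow k) ⟨T ⟨x, h1⟩, h2⟩, hTk⟩ :=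
      LinearPMap.pcomp_apply T (T.ppow k) h2' h2 hTk
    rw [e1, e2]
    exact LinearPMap.apply_congr heq

end Aux

section Main

variable {H : Type*} [NormedAddCommGroup H] [InnerProductSpace ℂ H] [CompleteSpace H]

local notation "⟪" x ", " y "⟫" => @inner ℂ _ _ x y

/-- One-step identity: `⟪C x, T y⟫ = ⟪C (T x), y⟫`. -/
theorem csymm_inner {C : Conjugation H} {T : H →ₗ.[ℂ] H}
    (hdense : Dense (T.domain : Set H)) (hsym : CSymmetric C T) (x y : T.domain) :
    ⟪C.toFun (x : H), (T y : H)⟫ = ⟪C.toFun (T x : H), (y : H)⟫ := by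
  obtain ⟨hx, hCx⟩ := hsym x
  have hadj : T.adjoint ⟨C.toFun (x : H), hx⟩ = C.toFun (T x : H) := by
    have := congr_arg C.toFun hCx
    rwa [C.invol] at this
  have := (T.adjoint_isFormalAdjoint hdense) ⟨C.toFun (x : H), hx⟩ y
  rw [hadj] at this
  exact this.symm

/-- Key inner-product identity for powers. -/
theorem csymm_inner_ppow {C : Conjugation H} {T : H →ₗ.[ℂ] H}
    (hdense : Dense (T.domain : Set H)) (hsym : CSymmetric C T) (k : ℕ)
    (x y : (T.ppow k).domain) :
    ⟪C.toFun ((T.ppow k) x : H), (y : H)⟫ = ⟪C.toFun (x : H), ((T.ppow k) y : H)⟫ := by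
  induction k with
  | zero => rfl
  | succ k ih =>
    obtain ⟨hx1, hx2, hxeq⟩ := T.ppow_shift k x.2
    obtain ⟨hy1, hy2, hyeq⟩ := T.ppow_shift k y.2
    obtain ⟨hyk, hTyk⟩ := (LinearPMap.mem_pcomp_iff T (T.ppow k)).1 y.2
    have ey : ((T.ppow (k + 1)) y : H) = (T ⟨(T.ppow k) ⟨(y : H), hyk⟩, hTyk⟩ : H) :=
      LinearPMap.pcomp_apply T (T.ppow k) y.2 hyk hTyk
    have ex : ((T.ppow (k + 1)) x : H) = ((T.ppow k) ⟨(T ⟨(x : H), hx1⟩ : H), hx2⟩ : H) :=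
      hxeq
    rw [ex, ey]
    -- IH with u := T x, v := y  (both in dom T^k)
    have step1 : ⟪C.toFun ((T.ppow k) ⟨(T ⟨(x : H), hx1⟩ : H), hx2⟩ : H), (y : H)⟫
        = ⟪C.toFun (T ⟨(x : H), hx1⟩ : H), ((T.ppow k) ⟨(y : H), hyk⟩ : H)⟫ :=
      ih ⟨(T ⟨(x : H), hx1⟩ : H), hx2⟩ ⟨(y : H), hyk⟩
    -- one-step with u := x, v := T^k y  (both in dom T)
    have step2 : ⟪C.toFun (T ⟨(x : H), hx1⟩ : H), ((T.ppow k) ⟨(y : H), hyk⟩ : H)⟫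
        = ⟪C.toFun (x : H), (T ⟨((T.ppow k) ⟨(y : H), hyk⟩ : H), hTyk⟩ : H)⟫ :=
      (csymm_inner hdense hsym ⟨(x : H), hx1⟩ ⟨((T.ppow k) ⟨(y : H), hyk⟩ : H), hTyk⟩).symm
    rw [step1, step2]

end Main

/-- If `T` is densely defined and `C`-symmetric and `T^k` is densely
defined, then `T^k` is `C`-symmetric. -/
theorem stmt_0 {H : Type*} [NormedAddCommGroup H] [InnerProductSpace ℂ H] [CompleteSpace H]
    (C : Conjugation H) (T : H →ₗ.[ℂ] H)
    (hdense : Dense (T.domain : Set H)) (hsym : CSymmetric C T)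
    (k : ℕ) (hkdense : Dense ((T.ppow k).domain : Set H)) :
    CSymmetric C (T.ppow k) := by
  intro x
  have key : ∀ y : (T.ppow k).domain,
      (inner ℂ (C.toFun ((T.ppow k) x : H)) (y : H) : ℂ)
        = inner ℂ (C.toFun (x : H)) ((T.ppow k) y : H) :=
    fun y => csymm_inner_ppow hdense hsym k x y
  have hx : C.toFun (x : H) ∈ (T.ppow k).adjoint.domain :=
    LinearPMap.mem_adjoint_domain_of_exists _ ⟨C.toFun ((T.ppow k) x : H), key⟩
  refine ⟨hx, ?_⟩
  have : (T.ppow k).adjoint ⟨C.toFun (x : H), hx⟩ = C.toFun ((T.ppow k) x : H) :=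
    LinearPMap.adjoint_apply_eq hkdense _ key
  rw [this, C.invol]
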